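/- For real x > 0, E₁(x) = −γ − ln x + ∑_{k=1}^∞ (−1)^{k+1} x^k/(k·k!), where E₁(x) = ∫_x^∞ e^{-t}/t dt. -/

import Mathlib

open MeasureTheory Real

open Set Filter

noncomputable def E1G (x : ℝ) : ℝ :=
    ∑' k : ℕ, (-1 : ℝ) ^ (k + 1 + 1) * x ^ (k + 1) / ((k + 1) * Nat.factorial (k + 1))



lemma E1_int1 {x : ℝ} (hx : 0 < x) :
    IntegrableOn (fun t => Real.exp (-t) / t) (Ioi x) := by
  have hg : IntegrableOn (fun t => Real.exp (-t) / x) (Ioi x) := by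
    have := (exp_neg_integrableOn_Ioi x one_pos).mul_const x⁻¹
    simpa [div_eq_mul_inv, neg_mul, one_mul, IntegrableOn] using this
  refine hg.mono' ?_ ?_
  · refine (ContinuousOn.aestronglyMeasurable ?_ measurableSet_Ioi)
    exact ContinuousOn.div (by fun_prop) continuousOn_id
      (fun t ht => (lt_trans hx ht).ne')
  · filter_upwards [ae_restrict_mem measurableSet_Ioi] with t ht
    have ht0 : 0 < t := lt_trans hx ht
    rw [Real.norm_eq_abs, abs_of_nonneg (by positivity)]
    exact div_le_div_of_nonneg_left (Real.exp_pos _).le hx ht.le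

lemma E1_int2 : IntegrableOn (fun t => Real.log t * Real.exp (-t)) (Ioi (0:ℝ)) := by
  have h1 : IntegrableOn (fun t : ℝ => Real.exp (-t) * t ^ ((1:ℝ)/2 - 1)) (Ioi 0) :=
    Real.GammaIntegral_convergent (by norm_num)
  have h2 : IntegrableOn (fun t : ℝ => Real.exp (-t) * t ^ ((2:ℝ) - 1)) (Ioi 0) :=
    Real.GammaIntegral_convergent (by norm_num)
  refine ((h1.const_mul 2).add h2).mono' ?_ ?_
  · refine (ContinuousOn.aestronglyMeasurable ?_ measurableSet_Ioi)
    exact ContinuousOn.mul (fun t ht => (Real.continuousAt_log (ne_of_gt ht)).continuousWithinAt)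
      (by fun_prop)
  · filter_upwards [ae_restrict_mem measurableSet_Ioi] with t ht
    have ht0 : (0:ℝ) < t := ht
    have hlog : |Real.log t| ≤ 2 * t ^ (-(1:ℝ)/2) + t := by
      rcases le_or_gt 1 t with h | h
      · have h1 : Real.log t ≤ t := (Real.log_le_sub_one_of_pos ht0).trans (by linarith)
        rw [abs_of_nonneg (Real.log_nonneg h)]
        have : (0:ℝ) ≤ 2 * t ^ (-(1:ℝ)/2) := by positivity
        linarith
      · have hneg : Real.log t ≤ 0 := Real.log_nonpos ht0.le h.le
        rw [abs_of_nonpos hneg]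
        have key : -Real.log t = 2 * Real.log (t ^ (-(1:ℝ)/2)) := by
          rw [Real.log_rpow ht0]; ring
        have h2 : Real.log (t ^ (-(1:ℝ)/2)) ≤ t ^ (-(1:ℝ)/2) - 1 :=
          Real.log_le_sub_one_of_pos (by positivity)
        rw [key]
        nlinarith [Real.rpow_pos_of_pos ht0 (-(1:ℝ)/2), ht0]
    have hexp : (0:ℝ) < Real.exp (-t) := Real.exp_pos _
    rw [Real.norm_eq_abs, abs_mul, abs_of_nonneg hexp.le]
    calc |Real.log t| * Real.exp (-t)
        ≤ (2 * t ^ (-(1:ℝ)/2) + t) * Real.exp (-t) := by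
          apply mul_le_mul_of_nonneg_right hlog hexp.le
      _ = 2 * (Real.exp (-t) * t ^ ((1:ℝ)/2 - 1)) + Real.exp (-t) * t ^ ((2:ℝ)-1) := by
          rw [show (1:ℝ)/2 - 1 = -(1:ℝ)/2 by norm_num, show (2:ℝ) - 1 = 1 by norm_num,
            Real.rpow_one]
          ring


lemma gamma_integral_eq : ∫ t in Ioi (0:ℝ), Real.log t * Real.exp (-t)
    = -Real.eulerMascheroniConstant := by
  have h1 := Complex.hasDerivAt_GammaIntegral (s := 1) (by norm_num)
  have heq : Complex.GammaIntegral =ᶠ[nhds (1:ℂ)] Complex.Gamma := by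
    have hopen : IsOpen {s : ℂ | 0 < s.re} := isOpen_lt continuous_const Complex.continuous_re
    filter_upwards [hopen.mem_nhds (by norm_num : (0:ℝ) < (1:ℂ).re)] with s hs
    exact (Complex.Gamma_eq_integral hs).symm
  have h2 : HasDerivAt Complex.Gamma
      (∫ t : ℝ in Ioi 0, (t:ℂ) ^ ((1:ℂ) - 1) * (Real.log t * Real.exp (-t))) 1 :=
    h1.congr_of_eventuallyEq heq.symm
  have h3 := Complex.hasDerivAt_Gamma_one
  have hD := h2.unique h3
  have hsimp : (∫ t : ℝ in Ioi 0, (t:ℂ) ^ ((1:ℂ) - 1) * (Real.log t * Real.exp (-t)))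
      = ((∫ t in Ioi (0:ℝ), Real.log t * Real.exp (-t) : ℝ) : ℂ) := by
    rw [show ((∫ t in Ioi (0:ℝ), Real.log t * Real.exp (-t) : ℝ) : ℂ)
        = ∫ t in Ioi (0:ℝ), ((Real.log t * Real.exp (-t) : ℝ) : ℂ) from integral_ofReal.symm]
    refine setIntegral_congr_fun measurableSet_Ioi (fun t ht => ?_)
    push_cast
    simp
  rw [hsimp] at hD
  exact_mod_cast hD


lemma E1_ibp {x : ℝ} (hx : 0 < x) :
    ∫ t in Ioi x, Real.exp (-t) / t
      = (∫ t in Ioi x, Real.log t * Real.exp (-t)) - Real.exp (-x) * Real.log x := by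
  have hderiv : ∀ t ∈ Ici x, HasDerivAt (fun t => -(Real.exp (-t) * Real.log t))
      (Real.log t * Real.exp (-t) - Real.exp (-t) / t) t := by
    intro t ht
    have ht0 : 0 < t := lt_of_lt_of_le hx ht
    have h1 : HasDerivAt (fun t : ℝ => Real.exp (-t)) (-Real.exp (-t)) t := by
      have h := (Real.hasDerivAt_exp (-t)).comp t (hasDerivAt_neg t)
      rw [mul_neg_one] at h
      exact h
    have h2 : HasDerivAt Real.log t⁻¹ t := Real.hasDerivAt_log ht0.ne'
    have := (h1.mul h2).neg
    refine this.congr_deriv ?_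
    ring
  have hint : IntegrableOn
      (fun t => Real.log t * Real.exp (-t) - Real.exp (-t) / t) (Ioi x) :=
    (E1_int2.mono_set (Ioi_subset_Ioi hx.le)).sub (E1_int1 hx)
  have htend : Tendsto (fun t => -(Real.exp (-t) * Real.log t)) atTop (nhds 0) := by
    have hb : Tendsto (fun t : ℝ => t ^ 1 * Real.exp (-t)) atTop (nhds 0) :=
      tendsto_pow_mul_exp_neg_atTop_nhds_zero 1
    rw [show (0:ℝ) = -0 by norm_num]
    refine Tendsto.neg (squeeze_zero_norm' ?_ (by simpa using hb.norm))
    filter_upwards [eventually_ge_atTop (1:ℝ)] with t ht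
    have h0 : (0:ℝ) < t := by linarith
    have hlog : Real.log t ≤ t := (Real.log_le_sub_one_of_pos h0).trans (by linarith)
    simp only [norm_mul, norm_neg, Real.norm_eq_abs, abs_of_pos (Real.exp_pos _),
      abs_of_nonneg (Real.log_nonneg ht), abs_of_pos h0, norm_pow, pow_one]
    nlinarith [Real.exp_pos (-t)]
  have key := integral_Ioi_of_hasDerivAt_of_tendsto' hderiv hint htend
  rw [integral_sub (E1_int2.mono_set (Ioi_subset_Ioi hx.le)) (E1_int1 hx)] at key
  simp only [zero_sub, neg_neg] at key
  linear_combination -key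


lemma hasSum_one_sub_exp (t : ℝ) :
    HasSum (fun k : ℕ => (-1:ℝ)^(k+1+1) * t^(k+1) / (Nat.factorial (k+1)))
      (1 - Real.exp (-t)) := by
  have h : HasSum (fun n : ℕ => (-t)^n / (Nat.factorial n)) (Real.exp (-t)) := by
    rw [Real.exp_eq_exp_ℝ]
    exact NormedSpace.expSeries_div_hasSum_exp (-t)
  have h1 : HasSum (fun k : ℕ => (-t)^(k+1) / (Nat.factorial (k+1)))
      (Real.exp (-t) - ∑ i ∈ Finset.range 1, (-t)^i / (Nat.factorial i)) :=
    (hasSum_nat_add_iff' 1).mpr (by simpa using h)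
  have h2 := h1.neg
  have hfun : (fun k : ℕ => (-1:ℝ)^(k+1+1) * t^(k+1) / (Nat.factorial (k+1)))
      = fun k : ℕ => -((-t)^(k+1)/(Nat.factorial (k+1))) := by
    funext k
    rw [neg_pow, pow_succ ((-1:ℝ)) (k+1)]
    ring
  have hv : 1 - Real.exp (-t)
      = -(Real.exp (-t) - ∑ i ∈ Finset.range 1, (-t)^i / (Nat.factorial i)) := by simp
  rw [hfun, hv]
  exact h2

lemma E1G_summable (x : ℝ) :
    Summable (fun k : ℕ => (-1 : ℝ) ^ (k + 1 + 1) * x ^ (k + 1)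
      / ((k + 1) * Nat.factorial (k + 1))) := by
  refine Summable.of_norm_bounded
    ((summable_nat_add_iff 1).mpr (Real.summable_pow_div_factorial |x|)) (fun k => ?_)
  have h1 : (0:ℝ) < (k+1 : ℝ) := by positivity
  have h2 : (0:ℝ) < ((Nat.factorial (k+1)) : ℝ) := by positivity
  rw [norm_div, norm_mul, norm_pow, norm_neg, norm_one, one_pow, one_mul, norm_pow,
    Real.norm_eq_abs, Real.norm_eq_abs, abs_mul, abs_of_pos h1, abs_of_pos h2]
  rw [div_le_div_iff₀ (by positivity) h2]
  have hles : ((Nat.factorial (k+1)):ℝ) ≤ ((k:ℝ)+1) * (Nat.factorial (k+1)) := by nlinarith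
  nlinarith [mul_le_mul_of_nonneg_left hles (pow_nonneg (abs_nonneg x) (k+1))]


lemma pow_int (a b : ℝ) (hab : a ≤ b) (k : ℕ) :
    ∫ t in Ioc a b, t ^ k = (b ^ (k+1) - a ^ (k+1)) / (k+1) := by
  rw [← intervalIntegral.integral_of_le hab, integral_pow]

lemma E1G_diff {a b : ℝ} (ha : 0 < a) (hab : a ≤ b) :
    E1G b - E1G a = ∫ t in Ioc a b, (1 - Real.exp (-t)) / t := by
  have hb : 0 < b := lt_of_lt_of_le ha hab
  set F : ℕ → ℝ → ℝ := fun k t => (-1:ℝ)^(k+1+1) * t^k / (Nat.factorial (k+1)) with hF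
  have hFi : ∀ k, IntegrableOn (F k) (Ioc a b) := by
    intro k
    apply Continuous.integrableOn_Ioc
    fun_prop
  have hnorm : ∀ k, (∫ t in Ioc a b, ‖F k t‖)
      = (b^(k+1) - a^(k+1)) / ((k+1) * Nat.factorial (k+1)) := by
    intro k
    have : ∀ t ∈ Ioc a b, ‖F k t‖ = t ^ k / (Nat.factorial (k+1)) := by
      intro t ht
      have ht0 : 0 < t := lt_of_lt_of_le ha ht.1.le
      rw [hF]
      simp only [norm_div, norm_mul, norm_pow, norm_neg, norm_one, one_pow, one_mul,
        Real.norm_eq_abs, abs_of_pos ht0,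
        abs_of_pos (by positivity : (0:ℝ) < ((Nat.factorial (k+1)):ℝ))]
    rw [setIntegral_congr_fun measurableSet_Ioc this]
    rw [integral_div, pow_int a b hab k]
    field_simp
  have hsum : Summable (fun k => ∫ t in Ioc a b, ‖F k t‖) := by
    simp_rw [hnorm]
    refine Summable.of_nonneg_of_le (fun k => ?_) (fun k => ?_)
      ((summable_nat_add_iff 1).mpr (Real.summable_pow_div_factorial b))
    · have hpow : a^(k+1) ≤ b^(k+1) := pow_le_pow_left₀ ha.le hab (k+1)
      exact div_nonneg (by linarith) (by positivity)
    · rw [div_le_div_iff₀ (by positivity) (by positivity)]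
      have hfp : (0:ℝ) < (Nat.factorial (k+1) : ℝ) := by positivity
      have h1 : b^(k+1) - a^(k+1) ≤ b^(k+1) := by nlinarith [pow_pos ha (k+1)]
      have h2 : ((Nat.factorial (k+1)):ℝ) ≤ ((k:ℝ)+1) * (Nat.factorial (k+1)) := by
        nlinarith
      calc (b^(k+1) - a^(k+1)) * (Nat.factorial (k+1) : ℝ)
          ≤ b^(k+1) * (Nat.factorial (k+1) : ℝ) :=
            mul_le_mul_of_nonneg_right h1 hfp.le
        _ ≤ b^(k+1) * (((k:ℝ)+1) * (Nat.factorial (k+1))) :=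
            mul_le_mul_of_nonneg_left h2 (pow_nonneg hb.le (k+1))
  have hswap := integral_tsum_of_summable_integral_norm hFi hsum
  have hL : ∀ t ∈ Ioc a b, (∑' k, F k t) = (1 - Real.exp (-t)) / t := by
    intro t ht
    have ht0 : 0 < t := lt_of_lt_of_le ha ht.1.le
    have h := (hasSum_one_sub_exp t).div_const t
    have heq : (fun k : ℕ => ((-1:ℝ)^(k+1+1) * t^(k+1) / (Nat.factorial (k+1))) / t)
        = (F · t) := by
      funext k
      rw [hF]
      field_simp
      ring
    rw [heq] at h
    exact h.tsum_eq
  have hRHS : ∀ k, (∫ t in Ioc a b, F k t)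
      = (-1:ℝ)^(k+1+1) * b^(k+1) / ((k+1) * Nat.factorial (k+1))
        - (-1:ℝ)^(k+1+1) * a^(k+1) / ((k+1) * Nat.factorial (k+1)) := by
    intro k
    rw [hF]
    simp only []
    rw [integral_div, integral_const_mul, pow_int a b hab k]
    field_simp
  calc E1G b - E1G a
      = ∑' k, ((-1:ℝ)^(k+1+1) * b^(k+1) / ((k+1) * Nat.factorial (k+1))
        - (-1:ℝ)^(k+1+1) * a^(k+1) / ((k+1) * Nat.factorial (k+1))) := by
        rw [E1G, E1G, ← Summable.tsum_sub (E1G_summable b) (E1G_summable a)]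
    _ = ∑' k, ∫ t in Ioc a b, F k t := by simp_rw [hRHS]
    _ = ∫ t in Ioc a b, ∑' k, F k t := hswap
    _ = ∫ t in Ioc a b, (1 - Real.exp (-t)) / t := by
        exact setIntegral_congr_fun measurableSet_Ioc hL


lemma E1_const {a b : ℝ} (ha : 0 < a) (hab : a ≤ b) :
    (∫ t in Ioi b, Real.exp (-t) / t) + Real.log b - E1G b
      = (∫ t in Ioi a, Real.exp (-t) / t) + Real.log a - E1G a := by
  have hb : 0 < b := lt_of_lt_of_le ha hab
  have hIe : IntegrableOn (fun t => Real.exp (-t) / t) (Ioc a b) := by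
    refine (ContinuousOn.integrableOn_compact isCompact_Icc ?_).mono_set Ioc_subset_Icc_self
    exact ContinuousOn.div (by fun_prop) continuousOn_id
      (fun t ht => ne_of_gt (lt_of_lt_of_le ha ht.1))
  have hI1 : IntegrableOn (fun t => (1 - Real.exp (-t)) / t) (Ioc a b) := by
    refine (ContinuousOn.integrableOn_compact isCompact_Icc ?_).mono_set Ioc_subset_Icc_self
    exact ContinuousOn.div (by fun_prop) continuousOn_id
      (fun t ht => ne_of_gt (lt_of_lt_of_le ha ht.1))
  have hsplit : (∫ t in Ioi a, Real.exp (-t) / t)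
      = (∫ t in Ioc a b, Real.exp (-t) / t) + ∫ t in Ioi b, Real.exp (-t) / t := by
    rw [← Ioc_union_Ioi_eq_Ioi hab]
    exact setIntegral_union (Ioc_disjoint_Ioi le_rfl) measurableSet_Ioi hIe (E1_int1 hb)
  have hlog : Real.log b - Real.log a = ∫ t in Ioc a b, 1 / t := by
    rw [← intervalIntegral.integral_of_le hab, integral_one_div
      (fun h => (by rw [uIcc_of_le hab] at h; exact absurd h.1 (not_le.mpr ha)))]
    rw [Real.log_div hb.ne' ha.ne']
  have hdiff := E1G_diff ha hab
  have hadd : (∫ t in Ioc a b, 1 / t)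
      = (∫ t in Ioc a b, Real.exp (-t) / t) + ∫ t in Ioc a b, (1 - Real.exp (-t)) / t := by
    rw [← integral_add hIe hI1]
    refine setIntegral_congr_fun measurableSet_Ioc (fun t ht => ?_)
    have : t ≠ 0 := ne_of_gt (lt_trans ha ht.1)
    field_simp
    ring
  linarith [hsplit, hlog, hdiff, hadd]


lemma tend1 : Tendsto (fun y => ∫ t in Ioi y, Real.log t * Real.exp (-t))
    (nhdsWithin 0 (Ioi 0)) (nhds (-Real.eulerMascheroniConstant)) := by
  have hsplit : ∀ y ∈ Ioc (0:ℝ) 1,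
      (∫ t in Ioi y, Real.log t * Real.exp (-t))
        = (∫ t in Ioi (0:ℝ), Real.log t * Real.exp (-t))
          - ∫ t in Ioc 0 y, Real.log t * Real.exp (-t) := by
    intro y hy
    rw [← Ioc_union_Ioi_eq_Ioi hy.1.le, setIntegral_union (Ioc_disjoint_Ioi le_rfl)
      measurableSet_Ioi (E1_int2.mono_set Ioc_subset_Ioi_self)
      (E1_int2.mono_set (Ioi_subset_Ioi hy.1.le))]
    ring
  have hcont : ContinuousOn (fun y => ∫ t in Ioc 0 y, Real.log t * Real.exp (-t))
      (Icc (0:ℝ) 1) :=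
    intervalIntegral.continuousOn_primitive
      ((E1_int2.mono_set Ioc_subset_Ioi_self).congr_set_ae
        (Ioc_ae_eq_Icc (α := ℝ) (a := 0) (b := 1)).symm)
  have h0 : Tendsto (fun y => ∫ t in Ioc 0 y, Real.log t * Real.exp (-t))
      (nhdsWithin 0 (Ioi 0)) (nhds 0) := by
    have := (hcont 0 (by norm_num)).tendsto
    rw [show (∫ t in Ioc (0:ℝ) 0, Real.log t * Real.exp (-t)) = 0 by simp] at this
    refine this.mono_left ?_
    rw [← nhdsWithin_Ioc_eq_nhdsGT (by norm_num : (0:ℝ) < 1)]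
    exact nhdsWithin_mono _ Ioc_subset_Icc_self
  have : Tendsto (fun y => (∫ t in Ioi (0:ℝ), Real.log t * Real.exp (-t))
      - ∫ t in Ioc 0 y, Real.log t * Real.exp (-t)) (nhdsWithin 0 (Ioi 0))
      (nhds (-Real.eulerMascheroniConstant)) := by
    rw [show -Real.eulerMascheroniConstant
      = (∫ t in Ioi (0:ℝ), Real.log t * Real.exp (-t)) - 0 by
        rw [gamma_integral_eq]; ring]
    exact (tendsto_const_nhds).sub h0
  refine this.congr' ?_
  filter_upwards [Ioc_mem_nhdsGT_of_mem (by norm_num : (0:ℝ) ∈ Ico (0:ℝ) 1)] with y hy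
  exact (hsplit y hy).symm

lemma tend2 : Tendsto (fun y => (1 - Real.exp (-y)) * Real.log y)
    (nhdsWithin 0 (Ioi 0)) (nhds 0) := by
  have hb : Tendsto (fun y : ℝ => Real.log y * y ^ (1:ℝ)) (nhdsWithin 0 (Ioi 0)) (nhds 0) :=
    tendsto_log_mul_rpow_nhdsGT_zero one_pos
  refine squeeze_zero_norm' ?_ (by simpa using hb.norm)
  filter_upwards [Ioc_mem_nhdsGT_of_mem (by norm_num : (0:ℝ) ∈ Ico (0:ℝ) 1),
    self_mem_nhdsWithin] with y hy hy0
  have hy0 : (0:ℝ) < y := hy0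
  have h1 : 0 ≤ 1 - Real.exp (-y) := by
    have := Real.exp_le_one_iff.mpr (by linarith : -y ≤ 0)
    linarith
  have h2 : 1 - Real.exp (-y) ≤ y := by
    have := Real.add_one_le_exp (-y)
    linarith
  simp only [norm_mul, Real.norm_eq_abs]
  rw [abs_of_nonneg h1, abs_of_pos hy0]
  nlinarith [abs_nonneg (Real.log y)]

lemma tend3 : Tendsto E1G (nhdsWithin 0 (Ioi 0)) (nhds 0) := by
  have hb : Tendsto (fun y : ℝ => y * (1 - y)⁻¹) (nhdsWithin 0 (Ioi 0)) (nhds 0) := by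
    have : ContinuousAt (fun y : ℝ => y * (1 - y)⁻¹) 0 := by
      apply ContinuousAt.mul continuousAt_id
      exact (continuousAt_const.sub continuousAt_id).inv₀ (by norm_num)
    simpa using this.tendsto.mono_left nhdsWithin_le_nhds
  refine squeeze_zero_norm' ?_ hb
  filter_upwards [Ioo_mem_nhdsGT_of_mem (by norm_num : (0:ℝ) ∈ Ico (0:ℝ) 1)] with y hy
  have hy0 : 0 < y := hy.1
  have hy1 : y < 1 := hy.2
  have hgeo : Summable (fun k : ℕ => y ^ (k+1)) := by
    apply Summable.comp_injective (summable_geometric_of_lt_one hy0.le hy1)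
      (add_left_injective 1)
  have hterm : ∀ k : ℕ, ‖(-1 : ℝ) ^ (k + 1 + 1) * y ^ (k + 1)
      / ((k + 1) * Nat.factorial (k + 1))‖ ≤ y ^ (k+1) := by
    intro k
    have hd : (1:ℝ) ≤ ((k:ℝ)+1) * (Nat.factorial (k+1)) := by
      have h1 : (1:ℝ) ≤ ((k:ℝ)+1) := by
        have : (0:ℝ) ≤ (k:ℝ) := Nat.cast_nonneg k
        linarith
      have h2 : (1:ℝ) ≤ (Nat.factorial (k+1) : ℝ) := by
        exact_mod_cast Nat.one_le_iff_ne_zero.mpr (Nat.factorial_pos (k+1)).ne'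
      nlinarith
    rw [norm_div, norm_mul, norm_pow, norm_neg, norm_one, one_pow, one_mul, norm_pow,
      Real.norm_eq_abs, Real.norm_eq_abs, abs_of_pos hy0]
    rw [div_le_iff₀ (by positivity)]
    have : |(((k:ℝ)+1) * (Nat.factorial (k+1)))| = ((k:ℝ)+1) * (Nat.factorial (k+1)) := by
      rw [abs_of_pos]; positivity
    rw [this]
    nlinarith [pow_pos hy0 (k+1)]
  have hnormsum : Summable (fun k : ℕ => ‖(-1 : ℝ) ^ (k + 1 + 1) * y ^ (k + 1)
      / ((k + 1) * Nat.factorial (k + 1))‖) := (E1G_summable y).abs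
  calc ‖E1G y‖ ≤ ∑' k : ℕ, ‖(-1 : ℝ) ^ (k + 1 + 1) * y ^ (k + 1)
      / ((k + 1) * Nat.factorial (k + 1))‖ := norm_tsum_le_tsum_norm hnormsum
    _ ≤ ∑' k : ℕ, y ^ (k+1) := Summable.tsum_le_tsum hterm hnormsum hgeo
    _ = y * (1-y)⁻¹ := by
        simp_rw [pow_succ, mul_comm (y ^ _) y]
        rw [tsum_mul_left, tsum_geometric_of_lt_one hy0.le hy1]


theorem E1_series (x : ℝ) (hx : 0 < x) :
    ∫ t in Set.Ioi x, Real.exp (-t) / t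
      = -Real.eulerMascheroniConstant - Real.log x
        + ∑' k : ℕ, (-1 : ℝ) ^ (k + 1 + 1) * x ^ (k + 1)
            / ((k + 1) * Nat.factorial (k + 1)) := by
  set h : ℝ → ℝ := fun y => (∫ t in Ioi y, Real.exp (-t) / t) + Real.log y - E1G y with hh
  have hconst : ∀ y ∈ Ioi (0:ℝ), h y = h x := by
    intro y hy
    rcases le_total x y with hxy | hxy
    · exact E1_const hx hxy
    · exact (E1_const hy hxy).symm
  have htend : Tendsto h (nhdsWithin 0 (Ioi 0)) (nhds (-Real.eulerMascheroniConstant)) := by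
    have hcomb := (tend1.add tend2).sub tend3
    rw [add_zero, sub_zero] at hcomb
    refine hcomb.congr' ?_
    filter_upwards [self_mem_nhdsWithin] with y hy
    have hy0 : (0:ℝ) < y := hy
    rw [hh]
    simp only []
    rw [E1_ibp hy0]
    ring
  have htendc : Tendsto h (nhdsWithin 0 (Ioi 0)) (nhds (h x)) := by
    refine tendsto_const_nhds.congr' ?_
    filter_upwards [self_mem_nhdsWithin] with y hy
    exact (hconst y hy).symm
  have hval : h x = -Real.eulerMascheroniConstant := tendsto_nhds_unique htendc htend
  rw [hh] at hval
  simp only [] at hval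
  have : E1G x = ∑' k : ℕ, (-1 : ℝ) ^ (k + 1 + 1) * x ^ (k + 1)
      / ((k + 1) * Nat.factorial (k + 1)) := rfl
  linarith [hval, this.symm.le, this.le]
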